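/- Let f : ℝⁿ → ℝ, let D ⊆ ℝⁿ be open, and let g : ℝⁿ → ℝ be continuously differentiable on D. Then the following are equivalent: (i) for every x ∈ D and every v ∈ ∇̄f(x), ⟨∇g(x), v⟩ ≥ 0; (ii) for every x ∈ D and every u ∈ ∇̂f(x), ⟨∇g(x), u⟩ ≥ 0. -/
import Mathlib


open Filter Topology
open scoped RealInnerProductSpace ENNReal

/-- The auxiliary normalized gradient map `∇̃f` from the paper: a singleton containing the
normalized gradient at differentiability points with nonzero gradient, `{0}` where `f` is
locally constant, and empty otherwise. -/
noncomputable def tGrad {n : ℕ} (f : EuclideanSpace ℝ (Fin n) → ℝ)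
    (x : EuclideanSpace ℝ (Fin n)) : Set (EuclideanSpace ℝ (Fin n)) :=
  {v | (DifferentiableAt ℝ f x ∧ gradient f x ≠ 0 ∧ v = ‖gradient f x‖⁻¹ • gradient f x) ∨
       ((∀ᶠ y in 𝓝 x, f y = f x) ∧ v = 0)}

/-- The normalized subdifferential `∇̂f`: the graph closure of `∇̃f`. -/
noncomputable def hGrad {n : ℕ} (f : EuclideanSpace ℝ (Fin n) → ℝ)
    (x : EuclideanSpace ℝ (Fin n)) : Set (EuclideanSpace ℝ (Fin n)) :=
  {v | ∃ xs vs : ℕ → EuclideanSpace ℝ (Fin n),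
      (∀ k, vs k ∈ tGrad f (xs k)) ∧ Tendsto xs atTop (𝓝 x) ∧ Tendsto vs atTop (𝓝 v)}

/-- The Bouligand subdifferential `∇̄f`: limits of gradients along sequences of
differentiability points. -/
noncomputable def bGrad {n : ℕ} (f : EuclideanSpace ℝ (Fin n) → ℝ)
    (x : EuclideanSpace ℝ (Fin n)) : Set (EuclideanSpace ℝ (Fin n)) :=
  {v | ∃ xs : ℕ → EuclideanSpace ℝ (Fin n),
      (∀ k, DifferentiableAt ℝ f (xs k)) ∧ Tendsto xs atTop (𝓝 x) ∧
      Tendsto (fun k => gradient f (xs k)) atTop (𝓝 v)}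

/-- Continuity of the gradient of a `C¹` function on an open set. -/
lemma gradient_continuousAt_of_contDiffOn {n : ℕ}
    {g : EuclideanSpace ℝ (Fin n) → ℝ} {D : Set (EuclideanSpace ℝ (Fin n))}
    (hD : IsOpen D) (hg : ContDiffOn ℝ 1 g D) {x : EuclideanSpace ℝ (Fin n)} (hx : x ∈ D) :
    ContinuousAt (gradient g) x := by
  have h1 : ContinuousOn (fderiv ℝ g) D :=
    hg.continuousOn_fderiv_of_isOpen hD le_rfl
  have h2 : ContinuousAt (fderiv ℝ g) x := h1.continuousAt (hD.mem_nhds hx)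
  have : ContinuousAt (fun y => (InnerProductSpace.toDual ℝ
      (EuclideanSpace ℝ (Fin n))).symm (fderiv ℝ g y)) x :=
    (InnerProductSpace.toDual ℝ (EuclideanSpace ℝ (Fin n))).symm.continuous.continuousAt.comp h2
  exact this

/-- For `D` open and `g` continuously differentiable on `D`, the first-order condition
`⟨∇g(x), v⟩ ≥ 0` for all `v ∈ ∇̄f(x)` on `D` is equivalent to `⟨∇g(x), u⟩ ≥ 0` for all
`u ∈ ∇̂f(x)` on `D`. -/
theorem stmt14 {n : ℕ} (f : EuclideanSpace ℝ (Fin n) → ℝ)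
    (D : Set (EuclideanSpace ℝ (Fin n))) (hD : IsOpen D)
    (g : EuclideanSpace ℝ (Fin n) → ℝ) (hg : ContDiffOn ℝ 1 g D) :
    (∀ x ∈ D, ∀ v ∈ bGrad f x, 0 ≤ ⟪gradient g x, v⟫) ↔
    (∀ x ∈ D, ∀ u ∈ hGrad f x, 0 ≤ ⟪gradient g x, u⟫) := by
  constructor
  · -- (i) → (ii)
    rintro hb x hx u ⟨xs, vs, hmem, hxs, hvs⟩
    -- eventually xs k ∈ D
    have hev : ∀ᶠ k in atTop, xs k ∈ D := hxs (hD.mem_nhds hx)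
    have hgc := gradient_continuousAt_of_contDiffOn hD hg hx
    have htend : Tendsto (fun k => ⟪gradient g (xs k), vs k⟫) atTop
        (𝓝 ⟪gradient g x, u⟫) :=
      ((hgc.tendsto.comp hxs).inner hvs)
    refine ge_of_tendsto htend ?_
    filter_upwards [hev] with k hk
    rcases hmem k with ⟨hdiff, hne, hv⟩ | ⟨hconst, hv⟩
    · -- vs k is the normalized gradient
      have hgrad : gradient f (xs k) ∈ bGrad f (xs k) := by
        exact ⟨fun _ => xs k, fun _ => hdiff, tendsto_const_nhds, tendsto_const_nhds⟩
      have h0 := hb (xs k) hk (gradient f (xs k)) hgrad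
      rw [hv, real_inner_smul_right]
      positivity
    · rw [hv, inner_zero_right]
  · -- (ii) → (i)
    rintro hh x hx v ⟨xs, hdiff, hxs, hgrad⟩
    by_cases hv : v = 0
    · simp [hv]
    · -- eventually gradient f (xs k) ≠ 0
      have hne : ∀ᶠ k in atTop, gradient f (xs k) ≠ 0 := by
        have : ∀ᶠ k in atTop, gradient f (xs k) ∈ {w | w ≠ 0} :=
          hgrad (isOpen_compl_singleton.mem_nhds hv)
        exact this
      obtain ⟨N, hN⟩ := hne.exists_forall_of_atTop
      set xs' : ℕ → EuclideanSpace ℝ (Fin n) := fun k => xs (k + N) with hxs'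
      have hmem : ∀ k, ‖gradient f (xs' k)‖⁻¹ • gradient f (xs' k) ∈ tGrad f (xs' k) := by
        intro k
        exact Or.inl ⟨hdiff _, hN _ (Nat.le_add_left N k), rfl⟩
      have hxs'lim : Tendsto xs' atTop (𝓝 x) := hxs.comp (tendsto_add_atTop_nat N)
      have hglim : Tendsto (fun k => gradient f (xs' k)) atTop (𝓝 v) :=
        hgrad.comp (tendsto_add_atTop_nat N)
      have hcont : ContinuousAt (fun w : EuclideanSpace ℝ (Fin n) => ‖w‖⁻¹ • w) v := by
        have h1 : ContinuousAt (fun w : EuclideanSpace ℝ (Fin n) => ‖w‖⁻¹) v :=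
          ((continuous_norm.continuousAt (x := v)).inv₀ (norm_ne_zero_iff.mpr hv))
        exact h1.smul continuousAt_id
      have hvlim : Tendsto (fun k => ‖gradient f (xs' k)‖⁻¹ • gradient f (xs' k)) atTop
          (𝓝 (‖v‖⁻¹ • v)) := hcont.tendsto.comp hglim
      have hmemh : ‖v‖⁻¹ • v ∈ hGrad f x :=
        ⟨xs', fun k => ‖gradient f (xs' k)‖⁻¹ • gradient f (xs' k), hmem, hxs'lim, hvlim⟩
      have h0 := hh x hx _ hmemh
      rw [real_inner_smul_right] at h0
      have hnorm : (0:ℝ) < ‖v‖⁻¹ := inv_pos.mpr (norm_pos_iff.mpr hv)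
      nlinarith [h0]
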